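/- Let P be a double histogram and let s be a vertex of P. Then I^3(s) = I^2(bd(s)) ∪ I^2(td(s)), where I^2(v) denotes the second interval of the vertex v under the same inductive definition. -/

import Mathlib

open Classical Set

noncomputable section

/-- A *double histogram*: an `x`-monotone orthogonal polygon in general position whose
base line lies on the `x`-axis.  It is described by its bottom columns (over the
breakpoints `xs` with depths `d < 0`) and its top columns (over the breakpoints `ys`
with heights `h > 0`).  A *simple histogram* is the special case `n = 1`, where the
upper boundary is the single (base) edge at height `h 0`. -/
structure DoubleHistogram where
  m : ℕ
  n : ℕ
  hm : 0 < m
  hn : 0 < n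
  xs : Fin (m + 1) → ℝ
  ys : Fin (n + 1) → ℝ
  d : Fin m → ℝ
  h : Fin n → ℝ
  xs_mono : StrictMono xs
  ys_mono : StrictMono ys
  left_eq : ys 0 = xs 0
  right_eq : ys (Fin.last n) = xs (Fin.last m)
  d_neg : ∀ i, d i < 0
  h_pos : ∀ j, 0 < h j
  /-- general position: no three vertices on a horizontal line -/
  d_inj : Function.Injective d
  h_inj : Function.Injective h
  /-- general position: no three vertices on a vertical line -/
  gen_pos : ∀ (i : Fin (m + 1)) (j : Fin (n + 1)), xs i = ys j →
      (i = 0 ∧ j = 0) ∨ (i = Fin.last m ∧ j = Fin.last n)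

/-- Among the reals in `A`, the one of minimum absolute value
(i.e. "closest to the base line"). -/
def closestToBase (A : Set ℝ) : ℝ :=
  sSup {y | y ∈ A ∧ ∀ y' ∈ A, |y| ≤ |y'|}

/-- The leftmost point of `S` among those minimizing the distance `|y|` to the base line. -/
def leftmostLowest (S : Set (ℝ × ℝ)) : ℝ × ℝ :=
  (sInf {x | ∃ y, (x, y) ∈ S ∧ ∀ q ∈ S, |y| ≤ |q.2|},
    closestToBase {y | (sInf {x | ∃ y', (x, y') ∈ S ∧ ∀ q ∈ S, |y'| ≤ |q.2|}, y) ∈ S})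

namespace DoubleHistogram

variable (H : DoubleHistogram)

/-- The polygon `P`, as a closed region of the plane. -/
def region : Set (ℝ × ℝ) :=
  (⋃ i : Fin H.m, Icc (H.xs i.castSucc) (H.xs i.succ) ×ˢ Icc (H.d i) 0) ∪
    ⋃ j : Fin H.n, Icc (H.ys j.castSucc) (H.ys j.succ) ×ˢ Icc 0 (H.h j)

/-- The vertex set `V(P)`. -/
def verts : Set (ℝ × ℝ) :=
  (⋃ i : Fin H.m,
      ({(H.xs i.castSucc, H.d i), (H.xs i.succ, H.d i)} : Set (ℝ × ℝ))) ∪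
    ⋃ j : Fin H.n,
      ({(H.ys j.castSucc, H.h j), (H.ys j.succ, H.h j)} : Set (ℝ × ℝ))

/-- `p` and `q` are co-visible: the axis-parallel rectangle they span lies in `P`. -/
def covisible (p q : ℝ × ℝ) : Prop :=
  Icc (min p.1 q.1) (max p.1 q.1) ×ˢ Icc (min p.2 q.2) (max p.2 q.2) ⊆ H.region

lemma covisible_symm {p q : ℝ × ℝ} (hpq : H.covisible p q) : H.covisible q p := by
  unfold covisible at hpq ⊢
  rwa [min_comm q.1 p.1, max_comm q.1 p.1, min_comm q.2 p.2, max_comm q.2 p.2]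

/-- The (unweighted) visibility graph `G(P)` on the vertices of `P`. -/
def visGraph : SimpleGraph ↥H.verts where
  Adj u v := u ≠ v ∧ H.covisible ↑u ↑v
  symm := ⟨fun _ _ hu => ⟨hu.1.symm, H.covisible_symm hu.2⟩⟩
  loopless := ⟨fun _ hu => hu.1 rfl⟩

/-- The closed neighborhood `N(v)`: `v` together with the vertices it sees. -/
def Nbr (v : ℝ × ℝ) : Set (ℝ × ℝ) :=
  {w | w ∈ H.verts ∧ (w = v ∨ H.covisible v w)}

/-- The abscissa where the leftward horizontal ray from `v` hits the boundary of `P`. -/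
def lhit (v : ℝ × ℝ) : ℝ :=
  sInf {x | x ≤ v.1 ∧ Icc x v.1 ×ˢ ({v.2} : Set ℝ) ⊆ H.region}

/-- The abscissa where the rightward horizontal ray from `v` hits the boundary of `P`. -/
def rhit (v : ℝ × ℝ) : ℝ :=
  sSup {x | v.1 ≤ x ∧ Icc v.1 x ×ˢ ({v.2} : Set ℝ) ⊆ H.region}

/-- The `y`-coordinate, among the vertices of `P` with abscissa `x` lying on the same side
of the base line as `side`, of the one closest to the base line (i.e. the endpoint of the
vertical edge at `x` closer to the base line). -/
def nearY (x : ℝ) (side : ℝ) : ℝ :=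
  if side < 0 then sSup {y | y < 0 ∧ (x, y) ∈ H.verts}
  else sInf {y | 0 < y ∧ (x, y) ∈ H.verts}

/-- The left point `ℓ(v)` (double-histogram version): if the leftward ray from `v` hits the
left boundary then the hit point, otherwise the endpoint of the hit vertical edge closer to
the base line. -/
def lpt (v : ℝ × ℝ) : ℝ × ℝ :=
  if H.lhit v = H.xs 0 then (H.xs 0, v.2) else (H.lhit v, H.nearY (H.lhit v) v.2)

/-- The right point `r(v)` (double-histogram version). -/
def rpt (v : ℝ × ℝ) : ℝ × ℝ :=
  if H.rhit v = H.xs (Fin.last H.m) then (H.xs (Fin.last H.m), v.2)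
  else (H.rhit v, H.nearY (H.rhit v) v.2)

/-- The left base vertex (for a simple histogram, i.e. `n = 1`). -/
def baseL : ℝ × ℝ := (H.xs 0, H.h ⟨0, H.hn⟩)

/-- The right base vertex (for a simple histogram, i.e. `n = 1`). -/
def baseR : ℝ × ℝ := (H.xs (Fin.last H.m), H.h ⟨0, H.hn⟩)

/-- The left point `ℓ(v)` (simple-histogram version): if the leftward ray from `v` hits the
left boundary then the left base vertex, otherwise the endpoint of the hit vertical edge
closer to the base edge. -/
def lptS (v : ℝ × ℝ) : ℝ × ℝ :=
  if H.lhit v = H.xs 0 then H.baseL else (H.lhit v, H.nearY (H.lhit v) v.2)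

/-- The right point `r(v)` (simple-histogram version). -/
def rptS (v : ℝ × ℝ) : ℝ × ℝ :=
  if H.rhit v = H.xs (Fin.last H.m) then H.baseR
  else (H.rhit v, H.nearY (H.rhit v) v.2)

/-- The interval `[p, q]`: all vertices of `P` between `p` and `q`. -/
def ivl (p q : ℝ × ℝ) : Set (ℝ × ℝ) :=
  {u | u ∈ H.verts ∧ p.1 ≤ u.1 ∧ u.1 ≤ q.1}

/-- The interval `I(v) = [ℓ(v), r(v)]` of a vertex (double-histogram version). -/
def Iv (v : ℝ × ℝ) : Set (ℝ × ℝ) := H.ivl (H.lpt v) (H.rpt v)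

/-- The interval `I(v) = [ℓ(v), r(v)]` of a vertex (simple-histogram version). -/
def IvS (v : ℝ × ℝ) : Set (ℝ × ℝ) := H.ivl (H.lptS v) (H.rptS v)

/-- The corresponding vertex `cv(v)`: the unique other vertex sharing a horizontal edge
(equivalently, by general position, the `y`-coordinate) with `v`. -/
def cv (v : ℝ × ℝ) : ℝ × ℝ :=
  (sSup {x | (x, v.2) ∈ H.verts ∧ x ≠ v.1}, v.2)

/-- `v` is a left vertex: the left endpoint of its horizontal edge. -/
def IsLeftVert (v : ℝ × ℝ) : Prop :=
  (∃ i : Fin H.m, v = (H.xs i.castSucc, H.d i)) ∨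
    ∃ j : Fin H.n, v = (H.ys j.castSucc, H.h j)

/-- `v` is a right vertex: the right endpoint of its horizontal edge. -/
def IsRightVert (v : ℝ × ℝ) : Prop :=
  (∃ i : Fin H.m, v = (H.xs i.succ, H.d i)) ∨
    ∃ j : Fin H.n, v = (H.ys j.succ, H.h j)

/-- `v` is an `ℓ`-reflex vertex (a left vertex with interior angle `3π/2`). -/
def IsLReflex (v : ℝ × ℝ) : Prop :=
  (∃ i : Fin H.m, ∃ _ : 0 < (i : ℕ),
      v = (H.xs i.castSucc, H.d i) ∧
        H.d ⟨(i : ℕ) - 1, lt_of_le_of_lt (Nat.sub_le _ _) i.isLt⟩ < H.d i) ∨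
    ∃ j : Fin H.n, ∃ _ : 0 < (j : ℕ),
      v = (H.ys j.castSucc, H.h j) ∧
        H.h j < H.h ⟨(j : ℕ) - 1, lt_of_le_of_lt (Nat.sub_le _ _) j.isLt⟩

/-- `v` is an `r`-reflex vertex (a right vertex with interior angle `3π/2`). -/
def IsRReflex (v : ℝ × ℝ) : Prop :=
  (∃ i : Fin H.m, ∃ hi : (i : ℕ) + 1 < H.m,
      v = (H.xs i.succ, H.d i) ∧ H.d ⟨(i : ℕ) + 1, hi⟩ < H.d i) ∨
    ∃ j : Fin H.n, ∃ hj : (j : ℕ) + 1 < H.n,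
      v = (H.ys j.succ, H.h j) ∧ H.h j < H.h ⟨(j : ℕ) + 1, hj⟩

/-- `v` is a reflex vertex. -/
def IsReflex (v : ℝ × ℝ) : Prop := H.IsLReflex v ∨ H.IsRReflex v

/-- The near dominator `nd(s,t)`: for `t` strictly right of `s`, the rightmost vertex of
`N(s)` to the left of `t`, ties broken towards the base line (symmetric otherwise). -/
def nd (s t : ℝ × ℝ) : ℝ × ℝ :=
  if s.1 < t.1 then
    let nx := sSup {x | (∃ y, (x, y) ∈ H.Nbr s) ∧ x ≤ t.1}
    (nx, closestToBase {y | (nx, y) ∈ H.Nbr s})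
  else
    let nx := sInf {x | (∃ y, (x, y) ∈ H.Nbr s) ∧ t.1 ≤ x}
    (nx, closestToBase {y | (nx, y) ∈ H.Nbr s})

/-- The far dominator `fd(s,t)`: for `t` strictly right of `s`, the leftmost vertex of
`N(s)` to the right of `t`, ties broken towards the base line; if there is no such vertex,
the point `r(s)` (symmetric otherwise). -/
def fd (s t : ℝ × ℝ) : ℝ × ℝ :=
  if s.1 < t.1 then
    if ∃ w ∈ H.Nbr s, t.1 ≤ w.1 then
      let nx := sInf {x | (∃ y, (x, y) ∈ H.Nbr s) ∧ t.1 ≤ x}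
      (nx, closestToBase {y | (nx, y) ∈ H.Nbr s})
    else H.rpt s
  else
    if ∃ w ∈ H.Nbr s, w.1 ≤ t.1 then
      let nx := sSup {x | (∃ y, (x, y) ∈ H.Nbr s) ∧ x ≤ t.1}
      (nx, closestToBase {y | (nx, y) ∈ H.Nbr s})
    else H.lpt s

/-- The sequence `a^i(s)`: `a^0(s) = s`, and `a^i(s)` is the leftmost vertex of
`A^i(s) = {v ∈ N(s) : ℓ(v)_x < ℓ(a^{i-1}(s))_x}` (ties towards the base line),
or `a^{i-1}(s)` if `A^i(s)` is empty. -/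
def aSeq (s : ℝ × ℝ) : ℕ → ℝ × ℝ := fun k =>
  Nat.rec (motive := fun _ => ℝ × ℝ) s
    (fun _ prev =>
      let A : Set (ℝ × ℝ) := {v | v ∈ H.Nbr s ∧ (H.lpt v).1 < (H.lpt prev).1}
      if A = ∅ then prev
      else
        let ax := sInf {x | ∃ y, (x, y) ∈ A}
        (ax, closestToBase {y | (ax, y) ∈ A}))
    k

/-- The sequence `b^i(s)`: `b^0(s) = s`, and `b^i(s)` is the rightmost vertex of
`B^i(s) = {v ∈ N(s) : r(v)_x > r(b^{i-1}(s))_x}` (ties towards the base line),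
or `b^{i-1}(s)` if `B^i(s)` is empty. -/
def bSeq (s : ℝ × ℝ) : ℕ → ℝ × ℝ := fun k =>
  Nat.rec (motive := fun _ => ℝ × ℝ) s
    (fun _ prev =>
      let B : Set (ℝ × ℝ) := {v | v ∈ H.Nbr s ∧ (H.rpt prev).1 < (H.rpt v).1}
      if B = ∅ then prev
      else
        let bx := sSup {x | ∃ y, (x, y) ∈ B}
        (bx, closestToBase {y | (bx, y) ∈ B}))
    k

/-- The pair of the `k`-th bottom dominator `bd^k(s)` and `k`-th top dominator `td^k(s)`:
`bd^0(s) = td^0(s) = s`; for `k > 0`, with `I^k(s) = I(bd^{k-1}(s)) ∪ I(td^{k-1}(s))`,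
`bd^k(s)` is the leftmost vertex of `I^k(s)⁻` minimizing the distance to the base line,
and `td^k(s)` the leftmost vertex of `I^k(s)⁺` minimizing the distance to the base line;
if one of the two sets is empty, the corresponding dominator equals the other one. -/
def bdtd (s : ℝ × ℝ) : ℕ → (ℝ × ℝ) × (ℝ × ℝ) := fun k =>
  Nat.rec (motive := fun _ => (ℝ × ℝ) × (ℝ × ℝ)) (s, s)
    (fun _ p =>
      let J : Set (ℝ × ℝ) := H.Iv p.1 ∪ H.Iv p.2
      let Jm : Set (ℝ × ℝ) := {v | v ∈ J ∧ v.2 < 0}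
      let Jp : Set (ℝ × ℝ) := {v | v ∈ J ∧ 0 < v.2}
      if Jm = ∅ then (leftmostLowest Jp, leftmostLowest Jp)
      else if Jp = ∅ then (leftmostLowest Jm, leftmostLowest Jm)
      else (leftmostLowest Jm, leftmostLowest Jp))
    k

/-- The `k`-th interval `I^k(s)`: `I^0(s) = {s}` and
`I^{k+1}(s) = I(bd^k(s)) ∪ I(td^k(s))`. -/
def Ipow (s : ℝ × ℝ) : ℕ → Set (ℝ × ℝ) := fun k =>
  Nat.rec (motive := fun _ => Set (ℝ × ℝ)) {s}
    (fun k _ => H.Iv (H.bdtd s k).1 ∪ H.Iv (H.bdtd s k).2) k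

/-- `w` lies on a shortest path from `s` to `t` in the visibility graph. -/
def OnShortestPath (s t w : ↥H.verts) : Prop :=
  ∃ p : H.visGraph.Walk s t, p.length = H.visGraph.dist s t ∧ w ∈ p.support

end DoubleHistogram

/-- A routing scheme for a graph `G`: every vertex carries a binary label and a binary
routing table, and the routing function maps (link table of the current vertex, routing
table of the current vertex, label of the target, current header) to the next vertex
together with the new header. -/
structure RoutingScheme {V : Type} (G : SimpleGraph V) where
  lab : V → List Bool
  tab : V → List Bool
  route : Set (List Bool) → List Bool → List Bool → List Bool → V × List Bool

namespace RoutingScheme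

variable {V : Type} {G : SimpleGraph V} (R : RoutingScheme G)

/-- One routing step at vertex `p` with header `h`, towards the target `t`: the routing
function is applied to the link table of `p` (the labels of its closed neighborhood),
the routing table of `p`, the label of `t` and the header `h`. -/
def step (t p : V) (h : List Bool) : V × List Bool :=
  R.route (R.lab '' {w | w = p ∨ G.Adj p w}) (R.tab p) (R.lab t) h

/-- The routing sequence from `s` towards `t`, starting with the empty header. -/
def seq (s t : V) : ℕ → V × List Bool := fun k =>
  Nat.rec (motive := fun _ => V × List Bool) (s, ([] : List Bool))
    (fun _ q => R.step t q.1 q.2) k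

end RoutingScheme

section Statement16

lemma abs_eq_same_sign_neg {a b : ℝ} (ha : a < 0) (hb : b < 0) (h : |a| = |b|) : a = b := by
  rw [abs_of_neg ha, abs_of_neg hb] at h; linarith

lemma abs_eq_same_sign_pos {a b : ℝ} (ha : 0 < a) (hb : 0 < b) (h : |a| = |b|) : a = b := by
  rw [abs_of_pos ha, abs_of_pos hb] at h; linarith

/-- Covering lemma: a point between `f 0` and `f (last k)` lies in some interval. -/
lemma exists_between_of_monotone {k : ℕ} (hk : 0 < k) (f : Fin (k + 1) → ℝ) (hf : Monotone f)
    {t : ℝ} (h1 : f 0 ≤ t) (h2 : t ≤ f (Fin.last k)) :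
    ∃ i : Fin k, f i.castSucc ≤ t ∧ t ≤ f i.succ := by
  classical
  set Sf : Finset (Fin (k + 1)) := Finset.univ.filter (fun i => f i ≤ t) with hSf
  have hne : Sf.Nonempty := ⟨0, by simp [hSf, h1]⟩
  set i0 : Fin (k + 1) := Sf.max' hne with hi0
  have hi0mem : i0 ∈ Sf := Sf.max'_mem hne
  have hi0le : f i0 ≤ t := by simpa [hSf] using hi0mem
  by_cases hlt : (i0 : ℕ) < k
  · refine ⟨⟨i0, hlt⟩, ?_, ?_⟩
    · have : (⟨(i0 : ℕ), hlt⟩ : Fin k).castSucc = i0 := by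
        apply Fin.ext; simp
      rw [this]; exact hi0le
    · by_contra hc
      push_neg at hc
      have hmem : (⟨(i0 : ℕ), hlt⟩ : Fin k).succ ∈ Sf := by
        simp [hSf]; exact le_of_lt hc
      have := Sf.le_max' _ hmem
      rw [← hi0] at this
      have h2 : (i0 : ℕ) + 1 ≤ (i0 : ℕ) := this
      omega
  · have hik : (i0 : ℕ) = k := by have := i0.isLt; omega
    refine ⟨⟨k - 1, by omega⟩, ?_, ?_⟩
    · refine le_trans (hf ?_) hi0le
      rw [Fin.le_def]
      simp only [Fin.coe_castSucc, hik]
      omega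
    · have hsucc : (⟨k - 1, by omega⟩ : Fin k).succ = Fin.last k := by
        apply Fin.ext; simp; omega
      rw [hsucc]; exact h2

namespace DoubleHistogram

variable (H : DoubleHistogram)

lemma verts_finite : H.verts.Finite := by
  refine Set.Finite.union ?_ ?_ <;>
    exact Set.finite_iUnion fun i => (Set.finite_singleton _).insert _

lemma mem_verts_iff {v : ℝ × ℝ} : v ∈ H.verts ↔
    (∃ i : Fin H.m, v = (H.xs i.castSucc, H.d i) ∨ v = (H.xs i.succ, H.d i)) ∨
    (∃ j : Fin H.n, v = (H.ys j.castSucc, H.h j) ∨ v = (H.ys j.succ, H.h j)) := by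
  simp [verts, Set.mem_iUnion]

lemma mem_region_iff {p : ℝ × ℝ} : p ∈ H.region ↔
    (∃ i : Fin H.m, (H.xs i.castSucc ≤ p.1 ∧ p.1 ≤ H.xs i.succ) ∧ (H.d i ≤ p.2 ∧ p.2 ≤ 0)) ∨
    (∃ j : Fin H.n, (H.ys j.castSucc ≤ p.1 ∧ p.1 ≤ H.ys j.succ) ∧ (0 ≤ p.2 ∧ p.2 ≤ H.h j)) := by
  simp only [region, Set.mem_union, Set.mem_iUnion, Set.mem_prod, Set.mem_Icc]

lemma ys_bounds (j : Fin (H.n + 1)) :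
    H.xs 0 ≤ H.ys j ∧ H.ys j ≤ H.xs (Fin.last H.m) := by
  constructor
  · rw [← H.left_eq]; exact H.ys_mono.monotone (Fin.zero_le j)
  · rw [← H.right_eq]; exact H.ys_mono.monotone (Fin.le_last j)

lemma region_x_bounds {p : ℝ × ℝ} (hp : p ∈ H.region) :
    H.xs 0 ≤ p.1 ∧ p.1 ≤ H.xs (Fin.last H.m) := by
  rcases (H.mem_region_iff).1 hp with ⟨i, ⟨h1, h2⟩, _⟩ | ⟨j, ⟨h1, h2⟩, _⟩
  · exact ⟨le_trans (H.xs_mono.monotone (Fin.zero_le _)) h1,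
      le_trans h2 (H.xs_mono.monotone (Fin.le_last _))⟩
  · exact ⟨le_trans (H.ys_bounds _).1 h1, le_trans h2 (H.ys_bounds _).2⟩

lemma verts_subset_region : H.verts ⊆ H.region := by
  intro v hv
  rcases (H.mem_verts_iff).1 hv with ⟨i, h | h⟩ | ⟨j, h | h⟩ <;> subst h <;>
    rw [mem_region_iff]
  · exact Or.inl ⟨i, ⟨le_rfl, le_of_lt (H.xs_mono (Fin.castSucc_lt_succ (i := i)))⟩,
      le_rfl, le_of_lt (H.d_neg i)⟩
  · exact Or.inl ⟨i, ⟨le_of_lt (H.xs_mono (Fin.castSucc_lt_succ (i := i))), le_rfl⟩,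
      le_rfl, le_of_lt (H.d_neg i)⟩
  · exact Or.inr ⟨j, ⟨le_rfl, le_of_lt (H.ys_mono (Fin.castSucc_lt_succ (i := j)))⟩,
      le_of_lt (H.h_pos j), le_rfl⟩
  · exact Or.inr ⟨j, ⟨le_of_lt (H.ys_mono (Fin.castSucc_lt_succ (i := j))), le_rfl⟩,
      le_of_lt (H.h_pos j), le_rfl⟩

lemma vert_neg {v : ℝ × ℝ} (hv : v ∈ H.verts) (h2 : v.2 < 0) :
    ∃ i : Fin H.m, v = (H.xs i.castSucc, H.d i) ∨ v = (H.xs i.succ, H.d i) := by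
  rcases (H.mem_verts_iff).1 hv with h | ⟨j, h | h⟩
  · exact h
  all_goals (subst h; exact absurd h2 (not_lt.2 (le_of_lt (H.h_pos j))))

lemma vert_pos {v : ℝ × ℝ} (hv : v ∈ H.verts) (h2 : 0 < v.2) :
    ∃ j : Fin H.n, v = (H.ys j.castSucc, H.h j) ∨ v = (H.ys j.succ, H.h j) := by
  rcases (H.mem_verts_iff).1 hv with ⟨i, h | h⟩ | h
  · subst h; exact absurd h2 (not_lt.2 (le_of_lt (H.d_neg i)))
  · subst h; exact absurd h2 (not_lt.2 (le_of_lt (H.d_neg i)))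
  · exact h

lemma vert_y_ne {v : ℝ × ℝ} (hv : v ∈ H.verts) : v.2 ≠ 0 := by
  rcases (H.mem_verts_iff).1 hv with ⟨i, h | h⟩ | ⟨j, h | h⟩ <;> subst h <;> simp
  · exact ne_of_lt (H.d_neg i)
  · exact ne_of_lt (H.d_neg i)
  · exact ne_of_gt (H.h_pos j)
  · exact ne_of_gt (H.h_pos j)

lemma raise_neg {t y y' : ℝ} (h : (t, y) ∈ H.region) (h1 : y ≤ y') (h2 : y' ≤ 0) :
    (t, y') ∈ H.region := by
  rcases (H.mem_region_iff).1 h with ⟨i, hx, hy⟩ | ⟨j, hx, hy⟩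
  · exact (H.mem_region_iff).2 (Or.inl ⟨i, hx, le_trans hy.1 h1, h2⟩)
  · have : y' = 0 := le_antisymm h2 (le_trans hy.1 h1)
    exact (H.mem_region_iff).2 (Or.inr ⟨j, hx, by simp [this], by
      simp [this]; exact le_of_lt (H.h_pos j)⟩)

lemma lower_pos {t y y' : ℝ} (h : (t, y) ∈ H.region) (h1 : 0 ≤ y') (h2 : y' ≤ y) :
    (t, y') ∈ H.region := by
  rcases (H.mem_region_iff).1 h with ⟨i, hx, hy⟩ | ⟨j, hx, hy⟩
  · have : y' = 0 := le_antisymm (le_trans h2 hy.2) h1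
    exact (H.mem_region_iff).2 (Or.inl ⟨i, hx, by
      simp [this]; exact le_of_lt (H.d_neg i), by simp [this]⟩)
  · exact (H.mem_region_iff).2 (Or.inr ⟨j, hx, h1, le_trans h2 hy.2⟩)

lemma region_closed : IsClosed H.region := by
  refine IsClosed.union ?_ ?_ <;>
    exact isClosed_iUnion_of_finite fun i => (isClosed_Icc.prod isClosed_Icc)

end DoubleHistogram

end Statement16

namespace DoubleHistogram

variable (H : DoubleHistogram)

/-- The defining set for `lhit`. -/
def lset (v : ℝ × ℝ) : Set ℝ := {x | x ≤ v.1 ∧ Icc x v.1 ×ˢ ({v.2} : Set ℝ) ⊆ H.region}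

/-- The defining set for `rhit`. -/
def rset (v : ℝ × ℝ) : Set ℝ := {x | v.1 ≤ x ∧ Icc v.1 x ×ˢ ({v.2} : Set ℝ) ⊆ H.region}

lemma lhit_eq (v : ℝ × ℝ) : H.lhit v = sInf (H.lset v) := rfl
lemma rhit_eq (v : ℝ × ℝ) : H.rhit v = sSup (H.rset v) := rfl

lemma self_mem_lset {v : ℝ × ℝ} (hv : v ∈ H.region) : v.1 ∈ H.lset v := by
  refine ⟨le_rfl, ?_⟩
  rintro ⟨a, b⟩ ⟨ha, hb⟩
  simp only [Set.mem_Icc, Set.mem_singleton_iff] at ha hb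
  have : a = v.1 := le_antisymm ha.2 ha.1
  rw [this, hb]
  simpa using hv

lemma self_mem_rset {v : ℝ × ℝ} (hv : v ∈ H.region) : v.1 ∈ H.rset v := by
  refine ⟨le_rfl, ?_⟩
  rintro ⟨a, b⟩ ⟨ha, hb⟩
  simp only [Set.mem_Icc, Set.mem_singleton_iff] at ha hb
  have : a = v.1 := le_antisymm ha.2 ha.1
  rw [this, hb]
  simpa using hv

lemma lset_bddBelow (v : ℝ × ℝ) : BddBelow (H.lset v) := by
  refine ⟨H.xs 0, fun x hx => ?_⟩
  have hmem : (x, v.2) ∈ H.region := hx.2 ⟨⟨le_rfl, hx.1⟩, rfl⟩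
  exact (H.region_x_bounds hmem).1

lemma rset_bddAbove (v : ℝ × ℝ) : BddAbove (H.rset v) := by
  refine ⟨H.xs (Fin.last H.m), fun x hx => ?_⟩
  have hmem : (x, v.2) ∈ H.region := hx.2 ⟨⟨hx.1, le_rfl⟩, rfl⟩
  exact (H.region_x_bounds hmem).2

lemma lhit_le_self {v : ℝ × ℝ} (hv : v ∈ H.region) : H.lhit v ≤ v.1 :=
  csInf_le (H.lset_bddBelow v) (H.self_mem_lset hv)

lemma self_le_rhit {v : ℝ × ℝ} (hv : v ∈ H.region) : v.1 ≤ H.rhit v :=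
  le_csSup (H.rset_bddAbove v) (H.self_mem_rset hv)

lemma xs0_le_lhit {v : ℝ × ℝ} (hv : v ∈ H.region) : H.xs 0 ≤ H.lhit v := by
  refine le_csInf ⟨v.1, H.self_mem_lset hv⟩ fun x hx => ?_
  have hmem : (x, v.2) ∈ H.region := hx.2 ⟨⟨le_rfl, hx.1⟩, rfl⟩
  exact (H.region_x_bounds hmem).1

lemma rhit_le_last {v : ℝ × ℝ} (hv : v ∈ H.region) : H.rhit v ≤ H.xs (Fin.last H.m) := by
  refine csSup_le ⟨v.1, H.self_mem_rset hv⟩ fun x hx => ?_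
  have hmem : (x, v.2) ∈ H.region := hx.2 ⟨⟨hx.1, le_rfl⟩, rfl⟩
  exact (H.region_x_bounds hmem).2

lemma lhit_le {v : ℝ × ℝ} {x : ℝ} (hx : x ≤ v.1)
    (hseg : Icc x v.1 ×ˢ ({v.2} : Set ℝ) ⊆ H.region) : H.lhit v ≤ x :=
  csInf_le (H.lset_bddBelow v) ⟨hx, hseg⟩

lemma le_rhit {v : ℝ × ℝ} {x : ℝ} (hx : v.1 ≤ x)
    (hseg : Icc v.1 x ×ˢ ({v.2} : Set ℝ) ⊆ H.region) : x ≤ H.rhit v :=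
  le_csSup (H.rset_bddAbove v) ⟨hx, hseg⟩

lemma lhit_pt_mem {v : ℝ × ℝ} (hv : v ∈ H.region) : (H.lhit v, v.2) ∈ H.region := by
  have hSne : (H.lset v).Nonempty := ⟨v.1, H.self_mem_lset hv⟩
  have hsub : H.lset v ⊆ {x | (x, v.2) ∈ H.region} := fun x hx => hx.2 ⟨⟨le_rfl, hx.1⟩, rfl⟩
  have hclosed : IsClosed {x : ℝ | (x, v.2) ∈ H.region} :=
    H.region_closed.preimage (by fun_prop : Continuous fun x : ℝ => (x, v.2))
  have := csInf_mem_closure hSne (H.lset_bddBelow v)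
  exact closure_minimal hsub hclosed this

lemma rhit_pt_mem {v : ℝ × ℝ} (hv : v ∈ H.region) : (H.rhit v, v.2) ∈ H.region := by
  have hSne : (H.rset v).Nonempty := ⟨v.1, H.self_mem_rset hv⟩
  have hsub : H.rset v ⊆ {x | (x, v.2) ∈ H.region} := fun x hx => hx.2 ⟨⟨hx.1, le_rfl⟩, rfl⟩
  have hclosed : IsClosed {x : ℝ | (x, v.2) ∈ H.region} :=
    H.region_closed.preimage (by fun_prop : Continuous fun x : ℝ => (x, v.2))
  have := csSup_mem_closure hSne (H.rset_bddAbove v)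
  exact closure_minimal hsub hclosed this

/-- The full horizontal segment from `lhit v` to `rhit v` at height `v.2` lies in `P`. -/
lemma seg_full {v : ℝ × ℝ} (hv : v ∈ H.region) :
    Icc (H.lhit v) (H.rhit v) ×ˢ ({v.2} : Set ℝ) ⊆ H.region := by
  rintro ⟨a, b⟩ ⟨ha, hb⟩
  simp only [Set.mem_Icc, Set.mem_singleton_iff] at ha hb
  subst hb
  rcases le_total a v.1 with hcase | hcase
  · rcases eq_or_lt_of_le ha.1 with heq | hlt
    · rw [← heq]; exact H.lhit_pt_mem hv
    · obtain ⟨x, hxmem, hx⟩ := exists_lt_of_csInf_lt ⟨v.1, H.self_mem_lset hv⟩ hlt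
      exact hxmem.2 ⟨⟨le_of_lt hx, hcase⟩, rfl⟩
  · rcases eq_or_lt_of_le ha.2 with heq | hlt
    · rw [heq]; exact H.rhit_pt_mem hv
    · obtain ⟨x, hxmem, hx⟩ := exists_lt_of_lt_csSup ⟨v.1, H.self_mem_rset hv⟩ hlt
      exact hxmem.2 ⟨⟨hcase, le_of_lt hx⟩, rfl⟩

end DoubleHistogram

namespace DoubleHistogram

variable (H : DoubleHistogram)

/-- Reach monotonicity, below the base line: a point closer to the base line whose
reach contains `q.1` has reach containing the reach of `q`. -/
lemma reach_mono_neg {p q : ℝ × ℝ} (hp : p ∈ H.region) (hq : q ∈ H.region)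
    (hq2 : q.2 ≤ p.2) (hp2 : p.2 ≤ 0) (hql : H.lhit p ≤ q.1) (hqr : q.1 ≤ H.rhit p) :
    H.lhit p ≤ H.lhit q ∧ H.rhit q ≤ H.rhit p := by
  constructor
  · refine le_csInf ⟨q.1, H.self_mem_lset hq⟩ fun x hx => ?_
    have hmin : H.lhit p ≤ min x (H.lhit p) := by
      refine H.lhit_le (le_trans (min_le_right _ _) (H.lhit_le_self hp)) ?_
      rintro ⟨a, b⟩ ⟨ha, hb⟩
      simp only [Set.mem_Icc, Set.mem_singleton_iff] at ha hb
      subst hb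
      by_cases hcase : H.lhit p ≤ a
      · exact H.seg_full hp ⟨⟨hcase, le_trans ha.2 (H.self_le_rhit hp)⟩, rfl⟩
      · push_neg at hcase
        have hxa : x ≤ a := by
          rcases le_total x (H.lhit p) with h | h
          · simpa [min_eq_left h] using ha.1
          · exact absurd (le_trans (by simpa [min_eq_right h] using ha.1) (le_refl a))
              (by intro h'; exact absurd h' (not_le.2 hcase))
        have haq : a ≤ q.1 := le_trans (le_of_lt hcase) hql
        have : (a, q.2) ∈ H.region := hx.2 ⟨⟨hxa, haq⟩, rfl⟩
        exact H.raise_neg this hq2 hp2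
    exact le_trans hmin (min_le_left _ _)
  · refine csSup_le ⟨q.1, H.self_mem_rset hq⟩ fun x hx => ?_
    have hmax : max x (H.rhit p) ≤ H.rhit p := by
      refine H.le_rhit (le_trans (H.self_le_rhit hp) (le_max_right _ _)) ?_
      rintro ⟨a, b⟩ ⟨ha, hb⟩
      simp only [Set.mem_Icc, Set.mem_singleton_iff] at ha hb
      subst hb
      by_cases hcase : a ≤ H.rhit p
      · exact H.seg_full hp ⟨⟨le_trans (H.lhit_le_self hp) ha.1, hcase⟩, rfl⟩
      · push_neg at hcase
        have hxa : a ≤ x := by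
          rcases le_total (H.rhit p) x with h | h
          · simpa [max_eq_left h] using ha.2
          · exact absurd (le_trans (le_refl a) (by simpa [max_eq_right h] using ha.2))
              (by intro h'; exact absurd h' (not_le.2 hcase))
        have haq : q.1 ≤ a := le_trans hqr (le_of_lt hcase)
        have : (a, q.2) ∈ H.region := hx.2 ⟨⟨haq, hxa⟩, rfl⟩
        exact H.raise_neg this hq2 hp2
    exact le_trans (le_max_left _ _) hmax

/-- Reach monotonicity, above the base line. -/
lemma reach_mono_pos {p q : ℝ × ℝ} (hp : p ∈ H.region) (hq : q ∈ H.region)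
    (hq2 : p.2 ≤ q.2) (hp2 : 0 ≤ p.2) (hql : H.lhit p ≤ q.1) (hqr : q.1 ≤ H.rhit p) :
    H.lhit p ≤ H.lhit q ∧ H.rhit q ≤ H.rhit p := by
  constructor
  · refine le_csInf ⟨q.1, H.self_mem_lset hq⟩ fun x hx => ?_
    have hmin : H.lhit p ≤ min x (H.lhit p) := by
      refine H.lhit_le (le_trans (min_le_right _ _) (H.lhit_le_self hp)) ?_
      rintro ⟨a, b⟩ ⟨ha, hb⟩
      simp only [Set.mem_Icc, Set.mem_singleton_iff] at ha hb
      subst hb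
      by_cases hcase : H.lhit p ≤ a
      · exact H.seg_full hp ⟨⟨hcase, le_trans ha.2 (H.self_le_rhit hp)⟩, rfl⟩
      · push_neg at hcase
        have hxa : x ≤ a := by
          rcases le_total x (H.lhit p) with h | h
          · simpa [min_eq_left h] using ha.1
          · exact absurd (le_trans (by simpa [min_eq_right h] using ha.1) (le_refl a))
              (by intro h'; exact absurd h' (not_le.2 hcase))
        have haq : a ≤ q.1 := le_trans (le_of_lt hcase) hql
        have : (a, q.2) ∈ H.region := hx.2 ⟨⟨hxa, haq⟩, rfl⟩
        exact H.lower_pos this hp2 hq2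
    exact le_trans hmin (min_le_left _ _)
  · refine csSup_le ⟨q.1, H.self_mem_rset hq⟩ fun x hx => ?_
    have hmax : max x (H.rhit p) ≤ H.rhit p := by
      refine H.le_rhit (le_trans (H.self_le_rhit hp) (le_max_right _ _)) ?_
      rintro ⟨a, b⟩ ⟨ha, hb⟩
      simp only [Set.mem_Icc, Set.mem_singleton_iff] at ha hb
      subst hb
      by_cases hcase : a ≤ H.rhit p
      · exact H.seg_full hp ⟨⟨le_trans (H.lhit_le_self hp) ha.1, hcase⟩, rfl⟩
      · push_neg at hcase
        have hxa : a ≤ x := by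
          rcases le_total (H.rhit p) x with h | h
          · simpa [max_eq_left h] using ha.2
          · exact absurd (le_trans (le_refl a) (by simpa [max_eq_right h] using ha.2))
              (by intro h'; exact absurd h' (not_le.2 hcase))
        have haq : q.1 ≤ a := le_trans hqr (le_of_lt hcase)
        have : (a, q.2) ∈ H.region := hx.2 ⟨⟨haq, hxa⟩, rfl⟩
        exact H.lower_pos this hp2 hq2
    exact le_trans (le_max_left _ _) hmax

lemma lpt_fst (v : ℝ × ℝ) : (H.lpt v).1 = H.lhit v := by
  unfold lpt; split
  · rename_i h; simp [h]
  · rfl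

lemma rpt_fst (v : ℝ × ℝ) : (H.rpt v).1 = H.rhit v := by
  unfold rpt; split
  · rename_i h; simp [h]
  · rfl

lemma Iv_eq (v : ℝ × ℝ) :
    H.Iv v = {u | u ∈ H.verts ∧ H.lhit v ≤ u.1 ∧ u.1 ≤ H.rhit v} := by
  unfold Iv ivl
  rw [lpt_fst, rpt_fst]

lemma Iv_mono {v w : ℝ × ℝ} (h1 : H.lhit w ≤ H.lhit v) (h2 : H.rhit v ≤ H.rhit w) :
    H.Iv v ⊆ H.Iv w := by
  rw [Iv_eq, Iv_eq]
  rintro u ⟨hu, h3, h4⟩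
  exact ⟨hu, le_trans h1 h3, le_trans h4 h2⟩

end DoubleHistogram

namespace DoubleHistogram

variable (H : DoubleHistogram)

/-- Key lemma, bottom version: the below-base vertex of a vertical strip closest to the
base line has reach covering the whole strip. -/
lemma key_neg {L R : ℝ} (hL : H.xs 0 ≤ L) (hR : R ≤ H.xs (Fin.last H.m))
    {w : ℝ × ℝ} (hw : w ∈ H.verts) (hw2 : w.2 < 0) (hwL : L ≤ w.1) (hwR : w.1 ≤ R)
    (hmin : ∀ u ∈ H.verts, L ≤ u.1 → u.1 ≤ R → u.2 < 0 → |w.2| ≤ |u.2|) :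
    H.lhit w ≤ L ∧ R ≤ H.rhit w := by
  have hwreg : w ∈ H.region := H.verts_subset_region hw
  have hcol : ∀ a : ℝ, L ≤ a → a ≤ R → (a, w.2) ∈ H.region := by
    intro a haL haR
    have ha0 : H.xs 0 ≤ a := le_trans hL haL
    have halast : a ≤ H.xs (Fin.last H.m) := le_trans haR hR
    obtain ⟨i, hi1, hi2⟩ := exists_between_of_monotone H.hm H.xs H.xs_mono.monotone ha0 halast
    have hdi : H.d i ≤ w.2 := by
      have key : ∀ x : ℝ, x = H.xs i.castSucc ∨ x = H.xs i.succ → L ≤ x → x ≤ R →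
          H.d i ≤ w.2 := by
        intro x hx hxL hxR
        have hu : ((x, H.d i) : ℝ × ℝ) ∈ H.verts := by
          rw [mem_verts_iff]
          rcases hx with h | h <;> subst h
          · exact Or.inl ⟨i, Or.inl rfl⟩
          · exact Or.inl ⟨i, Or.inr rfl⟩
        have := hmin _ hu hxL hxR (H.d_neg i)
        rw [abs_of_neg hw2, abs_of_neg (H.d_neg i)] at this
        linarith
      by_cases hc1 : L ≤ H.xs i.castSucc
      · exact key _ (Or.inl rfl) hc1 (le_trans hi1 haR)
      · push_neg at hc1
        by_cases hc2 : H.xs i.succ ≤ R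
        · exact key _ (Or.inr rfl) (le_trans haL hi2) hc2
        · push_neg at hc2
          -- the column strictly covers [L, R], but w.1 ∈ [L, R] is a breakpoint
          exfalso
          obtain ⟨k, hk⟩ := H.vert_neg hw hw2
          have hwx : ∃ k' : Fin (H.m + 1), w.1 = H.xs k' := by
            rcases hk with h | h <;> exact ⟨_, by rw [h]⟩
          obtain ⟨k', hk'⟩ := hwx
          have h1 : H.xs i.castSucc < H.xs k' := lt_of_lt_of_le hc1 (hk' ▸ hwL)
          have h2 : H.xs k' < H.xs i.succ := lt_of_le_of_lt (hk' ▸ hwR) hc2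
          have hlt1 : i.castSucc < k' := by
            by_contra hcon
            exact absurd (H.xs_mono.monotone (not_lt.1 hcon)) (not_le.2 h1)
          have hlt2 : k' < i.succ := by
            by_contra hcon
            exact absurd (H.xs_mono.monotone (not_lt.1 hcon)) (not_le.2 h2)
          rw [Fin.lt_def] at hlt1 hlt2
          simp only [Fin.coe_castSucc, Fin.val_succ] at hlt1 hlt2
          omega
    rw [mem_region_iff]
    exact Or.inl ⟨i, ⟨hi1, hi2⟩, hdi, le_of_lt hw2⟩
  constructor
  · refine H.lhit_le hwL ?_
    rintro ⟨a, b⟩ ⟨ha, hb⟩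
    simp only [Set.mem_Icc, Set.mem_singleton_iff] at ha hb
    subst hb
    exact hcol a ha.1 (le_trans ha.2 hwR)
  · refine H.le_rhit hwR ?_
    rintro ⟨a, b⟩ ⟨ha, hb⟩
    simp only [Set.mem_Icc, Set.mem_singleton_iff] at ha hb
    subst hb
    exact hcol a (le_trans hwL ha.1) ha.2

/-- Key lemma, top version. -/
lemma key_pos {L R : ℝ} (hL : H.xs 0 ≤ L) (hR : R ≤ H.xs (Fin.last H.m))
    {w : ℝ × ℝ} (hw : w ∈ H.verts) (hw2 : 0 < w.2) (hwL : L ≤ w.1) (hwR : w.1 ≤ R)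
    (hmin : ∀ u ∈ H.verts, L ≤ u.1 → u.1 ≤ R → 0 < u.2 → |w.2| ≤ |u.2|) :
    H.lhit w ≤ L ∧ R ≤ H.rhit w := by
  have hwreg : w ∈ H.region := H.verts_subset_region hw
  have hcol : ∀ a : ℝ, L ≤ a → a ≤ R → (a, w.2) ∈ H.region := by
    intro a haL haR
    have ha0 : H.ys 0 ≤ a := by rw [H.left_eq]; exact le_trans hL haL
    have halast : a ≤ H.ys (Fin.last H.n) := by rw [H.right_eq]; exact le_trans haR hR
    obtain ⟨j, hj1, hj2⟩ := exists_between_of_monotone H.hn H.ys H.ys_mono.monotone ha0 halast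
    have hdj : w.2 ≤ H.h j := by
      have key : ∀ x : ℝ, x = H.ys j.castSucc ∨ x = H.ys j.succ → L ≤ x → x ≤ R →
          w.2 ≤ H.h j := by
        intro x hx hxL hxR
        have hu : ((x, H.h j) : ℝ × ℝ) ∈ H.verts := by
          rw [mem_verts_iff]
          rcases hx with h | h <;> subst h
          · exact Or.inr ⟨j, Or.inl rfl⟩
          · exact Or.inr ⟨j, Or.inr rfl⟩
        have := hmin _ hu hxL hxR (H.h_pos j)
        rw [abs_of_pos hw2, abs_of_pos (H.h_pos j)] at this
        linarith
      by_cases hc1 : L ≤ H.ys j.castSucc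
      · exact key _ (Or.inl rfl) hc1 (le_trans hj1 haR)
      · push_neg at hc1
        by_cases hc2 : H.ys j.succ ≤ R
        · exact key _ (Or.inr rfl) (le_trans haL hj2) hc2
        · push_neg at hc2
          exfalso
          obtain ⟨k, hk⟩ := H.vert_pos hw hw2
          have hwx : ∃ k' : Fin (H.n + 1), w.1 = H.ys k' := by
            rcases hk with h | h <;> exact ⟨_, by rw [h]⟩
          obtain ⟨k', hk'⟩ := hwx
          have h1 : H.ys j.castSucc < H.ys k' := lt_of_lt_of_le hc1 (hk' ▸ hwL)
          have h2 : H.ys k' < H.ys j.succ := lt_of_le_of_lt (hk' ▸ hwR) hc2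
          have hlt1 : j.castSucc < k' := by
            by_contra hcon
            exact absurd (H.ys_mono.monotone (not_lt.1 hcon)) (not_le.2 h1)
          have hlt2 : k' < j.succ := by
            by_contra hcon
            exact absurd (H.ys_mono.monotone (not_lt.1 hcon)) (not_le.2 h2)
          rw [Fin.lt_def] at hlt1 hlt2
          simp only [Fin.coe_castSucc, Fin.val_succ] at hlt1 hlt2
          omega
    rw [mem_region_iff]
    exact Or.inr ⟨j, ⟨hj1, hj2⟩, le_of_lt hw2, hdj⟩
  constructor
  · refine H.lhit_le hwL ?_
    rintro ⟨a, b⟩ ⟨ha, hb⟩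
    simp only [Set.mem_Icc, Set.mem_singleton_iff] at ha hb
    subst hb
    exact hcol a ha.1 (le_trans ha.2 hwR)
  · refine H.le_rhit hwR ?_
    rintro ⟨a, b⟩ ⟨ha, hb⟩
    simp only [Set.mem_Icc, Set.mem_singleton_iff] at ha hb
    subst hb
    exact hcol a (le_trans hwL ha.1) ha.2

end DoubleHistogram

/-- Specification of `leftmostLowest` on a finite nonempty set in which equal distances
to the base line force equal ordinates. -/
lemma leftmostLowest_spec {S : Set (ℝ × ℝ)} (hfin : S.Finite) (hne : S.Nonempty)
    (hss : ∀ p ∈ S, ∀ q ∈ S, |p.2| = |q.2| → p.2 = q.2) :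
    leftmostLowest S ∈ S ∧ (∀ q ∈ S, |(leftmostLowest S).2| ≤ |q.2|) ∧
      (∀ q ∈ S, (∀ r ∈ S, |q.2| ≤ |r.2|) → (leftmostLowest S).1 ≤ q.1) := by
  classical
  set X : Set ℝ := {x | ∃ y, (x, y) ∈ S ∧ ∀ q ∈ S, |y| ≤ |q.2|} with hX
  set A : Set ℝ := {y | (sInf X, y) ∈ S} with hA
  have hlmL : leftmostLowest S = (sInf X, closestToBase A) := rfl
  -- a global minimizer exists
  obtain ⟨p0, hp0S, hp0min⟩ := Set.exists_min_image S (fun q => |q.2|) hfin hne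
  have hXfin : X.Finite := by
    have : X ⊆ Prod.fst '' S := by
      rintro x ⟨y, hy, -⟩
      exact ⟨(x, y), hy, rfl⟩
    exact (hfin.image _).subset this
  have hXne : X.Nonempty := ⟨p0.1, p0.2, by simpa using hp0S, hp0min⟩
  have hx0 : sInf X ∈ X := hXne.csInf_mem hXfin
  obtain ⟨y0, hy0S, hy0min⟩ := hx0
  have hAfin : A.Finite := by
    have : A ⊆ Prod.snd '' S := by
      rintro y hy
      exact ⟨(sInf X, y), hy, rfl⟩
    exact (hfin.image _).subset this
  have hAne : A.Nonempty := ⟨y0, hy0S⟩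
  obtain ⟨ys, hysA, hysmin⟩ := Set.exists_min_image A (fun y => |y|) hAfin hAne
  have hMs : {y | y ∈ A ∧ ∀ y' ∈ A, |y| ≤ |y'|} = {ys} := by
    ext y
    simp only [Set.mem_setOf_eq, Set.mem_singleton_iff]
    constructor
    · rintro ⟨hyA, hymin⟩
      have h1 : |y| ≤ |ys| := hymin _ hysA
      have h2 : |ys| ≤ |y| := hysmin _ hyA
      exact hss (sInf X, y) hyA (sInf X, ys) hysA (le_antisymm h1 h2)
    · rintro rfl
      exact ⟨hysA, hysmin⟩
  have hcb : closestToBase A = ys := by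
    unfold closestToBase
    rw [hMs]
    exact csSup_singleton ys
  have hglobal : ∀ q ∈ S, |ys| ≤ |q.2| := by
    intro q hq
    exact le_trans (hysmin _ hy0S) (hy0min q hq)
  refine ⟨?_, ?_, ?_⟩
  · rw [hlmL, hcb]; exact hysA
  · rw [hlmL, hcb]; exact hglobal
  · intro q hq hqmin
    rw [hlmL]
    have : q.1 ∈ X := ⟨q.2, by simpa using hq, hqmin⟩
    exact csInf_le hXfin.bddBelow this

/-- If the leftmost-lowest point of `S2` happens to lie in a subset `S1`, it is also the
leftmost-lowest point of `S1`. -/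
lemma leftmostLowest_eq_of_subset {S1 S2 : Set (ℝ × ℝ)} (h12 : S1 ⊆ S2) (hfin : S2.Finite)
    (hne : S1.Nonempty) (hss : ∀ p ∈ S2, ∀ q ∈ S2, |p.2| = |q.2| → p.2 = q.2)
    (hmem : leftmostLowest S2 ∈ S1) : leftmostLowest S1 = leftmostLowest S2 := by
  obtain ⟨h1mem, h1min, h1left⟩ := leftmostLowest_spec (hfin.subset h12) hne
    (fun p hp q hq => hss p (h12 hp) q (h12 hq))
  obtain ⟨h2mem, h2min, h2left⟩ := leftmostLowest_spec hfin (hne.mono h12) hss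
  set w1 := leftmostLowest S1
  set w2 := leftmostLowest S2
  have habs : |w1.2| = |w2.2| :=
    le_antisymm (h1min _ hmem) (h2min _ (h12 h1mem))
  have hy : w1.2 = w2.2 := hss _ (h12 h1mem) _ (h12 hmem) habs
  have hx1 : w1.1 ≤ w2.1 := h1left _ hmem (fun r hr => h2min _ (h12 hr))
  have hx2 : w2.1 ≤ w1.1 := h2left _ (h12 h1mem) (fun r hr => habs ▸ h2min r hr)
  exact Prod.ext (le_antisymm hx1 hx2) hy

namespace DoubleHistogram

variable (H : DoubleHistogram)

/-- One step of the dominator recursion. -/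
def bstep (a b : ℝ × ℝ) : (ℝ × ℝ) × (ℝ × ℝ) :=
  if {v | v ∈ H.Iv a ∪ H.Iv b ∧ v.2 < 0} = ∅ then
    (leftmostLowest {v | v ∈ H.Iv a ∪ H.Iv b ∧ 0 < v.2},
     leftmostLowest {v | v ∈ H.Iv a ∪ H.Iv b ∧ 0 < v.2})
  else if {v | v ∈ H.Iv a ∪ H.Iv b ∧ 0 < v.2} = ∅ then
    (leftmostLowest {v | v ∈ H.Iv a ∪ H.Iv b ∧ v.2 < 0},
     leftmostLowest {v | v ∈ H.Iv a ∪ H.Iv b ∧ v.2 < 0})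
  else (leftmostLowest {v | v ∈ H.Iv a ∪ H.Iv b ∧ v.2 < 0},
        leftmostLowest {v | v ∈ H.Iv a ∪ H.Iv b ∧ 0 < v.2})

lemma bdtd_zero (s : ℝ × ℝ) : H.bdtd s 0 = (s, s) := rfl

lemma bdtd_succ (s : ℝ × ℝ) (k : ℕ) :
    H.bdtd s (k + 1) = H.bstep (H.bdtd s k).1 (H.bdtd s k).2 := rfl

lemma Ipow_succ (s : ℝ × ℝ) (k : ℕ) :
    H.Ipow s (k + 1) = H.Iv (H.bdtd s k).1 ∪ H.Iv (H.bdtd s k).2 := rfl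

lemma bstep_of_m_empty {a b : ℝ × ℝ} (hm : {v | v ∈ H.Iv a ∪ H.Iv b ∧ v.2 < 0} = ∅) :
    H.bstep a b = (leftmostLowest {v | v ∈ H.Iv a ∪ H.Iv b ∧ 0 < v.2},
      leftmostLowest {v | v ∈ H.Iv a ∪ H.Iv b ∧ 0 < v.2}) := by
  unfold bstep; rw [if_pos hm]

lemma bstep_of_p_empty {a b : ℝ × ℝ} (hm : {v | v ∈ H.Iv a ∪ H.Iv b ∧ v.2 < 0} ≠ ∅)
    (hp : {v | v ∈ H.Iv a ∪ H.Iv b ∧ 0 < v.2} = ∅) :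
    H.bstep a b = (leftmostLowest {v | v ∈ H.Iv a ∪ H.Iv b ∧ v.2 < 0},
      leftmostLowest {v | v ∈ H.Iv a ∪ H.Iv b ∧ v.2 < 0}) := by
  unfold bstep; rw [if_neg hm, if_pos hp]

lemma bstep_of_ne {a b : ℝ × ℝ} (hm : {v | v ∈ H.Iv a ∪ H.Iv b ∧ v.2 < 0} ≠ ∅)
    (hp : {v | v ∈ H.Iv a ∪ H.Iv b ∧ 0 < v.2} ≠ ∅) :
    H.bstep a b = (leftmostLowest {v | v ∈ H.Iv a ∪ H.Iv b ∧ v.2 < 0},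
      leftmostLowest {v | v ∈ H.Iv a ∪ H.Iv b ∧ 0 < v.2}) := by
  unfold bstep; rw [if_neg hm, if_neg hp]

/-- The degenerate case: if the two first dominators coincide, the statement is
definitional. -/
lemma main_of_eq {s : ℝ × ℝ} (hBT : (H.bdtd s 1).1 = (H.bdtd s 1).2) :
    H.Ipow s 3 = H.Ipow (H.bdtd s 1).1 2 ∪ H.Ipow (H.bdtd s 1).2 2 := by
  have h1 : H.bdtd s 1 = ((H.bdtd s 1).1, (H.bdtd s 1).1) := Prod.ext rfl hBT.symm
  have h2 : H.bdtd s 2 = H.bdtd (H.bdtd s 1).1 1 := by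
    have e1 : H.bdtd s 2 = H.bstep (H.bdtd s 1).1 (H.bdtd s 1).2 := rfl
    have e2 : H.bdtd (H.bdtd s 1).1 1 =
        H.bstep (H.bdtd s 1).1 (H.bdtd s 1).1 := rfl
    rw [e1, e2, ← hBT]
  have h3 : H.Ipow s 3 = H.Iv (H.bdtd s 2).1 ∪ H.Iv (H.bdtd s 2).2 := rfl
  have h4 : H.Ipow (H.bdtd s 1).1 2 =
      H.Iv (H.bdtd (H.bdtd s 1).1 1).1 ∪ H.Iv (H.bdtd (H.bdtd s 1).1 1).2 := rfl
  rw [← hBT, Set.union_self, h3, h2, h4]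

end DoubleHistogram
/-- In a double histogram, for any vertex `s`,
`I^3(s) = I^2(bd(s)) ∪ I^2(td(s))`. -/
theorem I3_equals_extended_of_dominators
    (H : DoubleHistogram) (s : ↥H.verts) :
    H.Ipow (s : ℝ × ℝ) 3 =
      H.Ipow (H.bdtd (s : ℝ × ℝ) 1).1 2 ∪ H.Ipow (H.bdtd (s : ℝ × ℝ) 1).2 2 := by
  classical
  obtain ⟨sv, hs⟩ := s
  show H.Ipow sv 3 = H.Ipow (H.bdtd sv 1).1 2 ∪ H.Ipow (H.bdtd sv 1).2 2
  have hsreg : sv ∈ H.region := H.verts_subset_region hs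
  have hIs := H.Iv_eq sv
  have hsmem : sv ∈ H.Iv sv := by
    rw [hIs]; exact ⟨hs, H.lhit_le_self hsreg, H.self_le_rhit hsreg⟩
  have h1 : H.bdtd sv 1 = H.bstep sv sv := rfl
  by_cases hm1 : {v | v ∈ H.Iv sv ∪ H.Iv sv ∧ v.2 < 0} = ∅
  · apply H.main_of_eq; rw [h1, H.bstep_of_m_empty hm1]
  by_cases hp1 : {v | v ∈ H.Iv sv ∪ H.Iv sv ∧ 0 < v.2} = ∅
  · apply H.main_of_eq; rw [h1, H.bstep_of_p_empty hm1 hp1]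
  -- main case: both a bottom and a top first dominator exist
  set B := leftmostLowest {v | v ∈ H.Iv sv ∪ H.Iv sv ∧ v.2 < 0} with hBdef
  set T := leftmostLowest {v | v ∈ H.Iv sv ∪ H.Iv sv ∧ 0 < v.2} with hTdef
  have hbd1 : H.bdtd sv 1 = (B, T) := by rw [h1, H.bstep_of_ne hm1 hp1]
  have hB1 : (H.bdtd sv 1).1 = B := by rw [hbd1]
  have hT1 : (H.bdtd sv 1).2 = T := by rw [hbd1]
  have hSm1sub : {v | v ∈ H.Iv sv ∪ H.Iv sv ∧ v.2 < 0} ⊆ H.verts := by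
    rintro v ⟨hv, -⟩
    rcases hv with hv | hv <;> (rw [hIs] at hv; exact hv.1)
  have hSp1sub : {v | v ∈ H.Iv sv ∪ H.Iv sv ∧ 0 < v.2} ⊆ H.verts := by
    rintro v ⟨hv, -⟩
    rcases hv with hv | hv <;> (rw [hIs] at hv; exact hv.1)
  obtain ⟨hBmem, hBmin, -⟩ := leftmostLowest_spec (H.verts_finite.subset hSm1sub)
    (Set.nonempty_iff_ne_empty.2 hm1)
    (fun p hp q hq h => abs_eq_same_sign_neg hp.2 hq.2 h)
  obtain ⟨hTmem, hTmin, -⟩ := leftmostLowest_spec (H.verts_finite.subset hSp1sub)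
    (Set.nonempty_iff_ne_empty.2 hp1)
    (fun p hp q hq h => abs_eq_same_sign_pos hp.2 hq.2 h)
  rw [← hBdef] at hBmem hBmin
  rw [← hTdef] at hTmem hTmin
  have hB2' : B.2 < 0 := hBmem.2
  have hT2' : 0 < T.2 := hTmem.2
  have hBIvs : B ∈ H.Iv sv := by rcases hBmem.1 with h | h <;> exact h
  have hTIvs : T ∈ H.Iv sv := by rcases hTmem.1 with h | h <;> exact h
  have hBv : B ∈ H.verts := by rw [hIs] at hBIvs; exact hBIvs.1
  have hTv : T ∈ H.verts := by rw [hIs] at hTIvs; exact hTIvs.1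
  have hBreg : B ∈ H.region := H.verts_subset_region hBv
  have hTreg : T ∈ H.region := H.verts_subset_region hTv
  have hBstrip : H.lhit sv ≤ B.1 ∧ B.1 ≤ H.rhit sv := by
    rw [hIs] at hBIvs; exact hBIvs.2
  have hTstrip : H.lhit sv ≤ T.1 ∧ T.1 ≤ H.rhit sv := by
    rw [hIs] at hTIvs; exact hTIvs.2
  have hBreach : H.lhit B ≤ H.lhit sv ∧ H.rhit sv ≤ H.rhit B := by
    refine H.key_neg (H.xs0_le_lhit hsreg) (H.rhit_le_last hsreg) hBv hB2'
      hBstrip.1 hBstrip.2 ?_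
    intro u hu hu1 hu2 hu3
    exact hBmin u ⟨Or.inl (by rw [hIs]; exact ⟨hu, hu1, hu2⟩), hu3⟩
  have hTreach : H.lhit T ≤ H.lhit sv ∧ H.rhit sv ≤ H.rhit T := by
    refine H.key_pos (H.xs0_le_lhit hsreg) (H.rhit_le_last hsreg) hTv hT2'
      hTstrip.1 hTstrip.2 ?_
    intro u hu hu1 hu2 hu3
    exact hTmin u ⟨Or.inl (by rw [hIs]; exact ⟨hu, hu1, hu2⟩), hu3⟩
  have hsB : H.Iv sv ⊆ H.Iv B := H.Iv_mono hBreach.1 hBreach.2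
  have hsT : H.Iv sv ⊆ H.Iv T := H.Iv_mono hTreach.1 hTreach.2
  have hBself : B ∈ H.Iv B := hsB hBIvs
  have hTself : T ∈ H.Iv T := hsT hTIvs
  have hTinB : T ∈ H.Iv B := hsB hTIvs
  have hBinT : B ∈ H.Iv T := hsT hBIvs
  set L2 := min (H.lhit B) (H.lhit T) with hL2def
  set R2 := max (H.rhit B) (H.rhit T) with hR2def
  have hlsv : H.lhit sv ≤ H.rhit sv :=
    le_trans (H.lhit_le_self hsreg) (H.self_le_rhit hsreg)
  have hJ2 : ∀ u, u ∈ H.Iv B ∪ H.Iv T ↔ u ∈ H.verts ∧ L2 ≤ u.1 ∧ u.1 ≤ R2 := by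
    intro u
    constructor
    · rintro (hu | hu) <;> rw [H.Iv_eq] at hu
      · exact ⟨hu.1, le_trans (min_le_left _ _) hu.2.1,
          le_trans hu.2.2 (le_max_left _ _)⟩
      · exact ⟨hu.1, le_trans (min_le_right _ _) hu.2.1,
          le_trans hu.2.2 (le_max_right _ _)⟩
    · rintro ⟨hu, hu1, hu2⟩
      by_cases hc : u.1 ≤ H.rhit B
      · by_cases hc2 : H.lhit B ≤ u.1
        · exact Or.inl (by rw [H.Iv_eq]; exact ⟨hu, hc2, hc⟩)
        · push_neg at hc2
          refine Or.inr ?_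
          rw [H.Iv_eq]
          refine ⟨hu, ?_, ?_⟩
          · by_contra hcon; push_neg at hcon
            exact absurd hu1 (not_le.2 (lt_min hc2 hcon))
          · exact le_trans (le_of_lt hc2) (le_trans hBreach.1 (le_trans hlsv hTreach.2))
      · push_neg at hc
        refine Or.inr ?_
        rw [H.Iv_eq]
        refine ⟨hu, ?_, ?_⟩
        · exact le_trans hTreach.1 (le_trans hlsv (le_trans hBreach.2 (le_of_lt hc)))
        · by_contra hcon; push_neg at hcon
          exact absurd hu2 (not_le.2 (max_lt hc hcon))
  have hJ2msub : {v | v ∈ H.Iv B ∪ H.Iv T ∧ v.2 < 0} ⊆ H.verts :=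
    fun v hv => ((hJ2 v).1 hv.1).1
  have hJ2psub : {v | v ∈ H.Iv B ∪ H.Iv T ∧ 0 < v.2} ⊆ H.verts :=
    fun v hv => ((hJ2 v).1 hv.1).1
  have hJ2mne : {v | v ∈ H.Iv B ∪ H.Iv T ∧ v.2 < 0}.Nonempty := ⟨B, Or.inl hBself, hB2'⟩
  have hJ2pne : {v | v ∈ H.Iv B ∪ H.Iv T ∧ 0 < v.2}.Nonempty := ⟨T, Or.inr hTself, hT2'⟩
  set B2 := leftmostLowest {v | v ∈ H.Iv B ∪ H.Iv T ∧ v.2 < 0} with hB2def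
  set T2 := leftmostLowest {v | v ∈ H.Iv B ∪ H.Iv T ∧ 0 < v.2} with hT2def
  have hbd2 : H.bdtd sv 2 = (B2, T2) := by
    have e : H.bdtd sv 2 = H.bstep (H.bdtd sv 1).1 (H.bdtd sv 1).2 := rfl
    rw [e, hB1, hT1, H.bstep_of_ne (Set.nonempty_iff_ne_empty.1 hJ2mne)
      (Set.nonempty_iff_ne_empty.1 hJ2pne)]
  obtain ⟨hB2mem, hB2min, -⟩ := leftmostLowest_spec (H.verts_finite.subset hJ2msub)
    hJ2mne (fun p hp q hq h => abs_eq_same_sign_neg hp.2 hq.2 h)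
  obtain ⟨hT2mem, hT2min, -⟩ := leftmostLowest_spec (H.verts_finite.subset hJ2psub)
    hJ2pne (fun p hp q hq h => abs_eq_same_sign_pos hp.2 hq.2 h)
  rw [← hB2def] at hB2mem hB2min
  rw [← hT2def] at hT2mem hT2min
  have hB2neg : B2.2 < 0 := hB2mem.2
  have hT2pos : 0 < T2.2 := hT2mem.2
  have hB2v : B2 ∈ H.verts := ((hJ2 B2).1 hB2mem.1).1
  have hT2v : T2 ∈ H.verts := ((hJ2 T2).1 hT2mem.1).1
  have hB2strip := ((hJ2 B2).1 hB2mem.1).2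
  have hT2strip := ((hJ2 T2).1 hT2mem.1).2
  have hL2x : H.xs 0 ≤ L2 := le_min (H.xs0_le_lhit hBreg) (H.xs0_le_lhit hTreg)
  have hR2x : R2 ≤ H.xs (Fin.last H.m) :=
    max_le (H.rhit_le_last hBreg) (H.rhit_le_last hTreg)
  have hB2reach : H.lhit B2 ≤ L2 ∧ R2 ≤ H.rhit B2 := by
    refine H.key_neg hL2x hR2x hB2v hB2neg hB2strip.1 hB2strip.2 ?_
    intro u hu hu1 hu2 hu3
    exact hB2min u ⟨(hJ2 u).2 ⟨hu, hu1, hu2⟩, hu3⟩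
  have hT2reach : H.lhit T2 ≤ L2 ∧ R2 ≤ H.rhit T2 := by
    refine H.key_pos hL2x hR2x hT2v hT2pos hT2strip.1 hT2strip.2 ?_
    intro u hu hu1 hu2 hu3
    exact hT2min u ⟨(hJ2 u).2 ⟨hu, hu1, hu2⟩, hu3⟩
  have hB2reg : B2 ∈ H.region := H.verts_subset_region hB2v
  have hT2reg : T2 ∈ H.region := H.verts_subset_region hT2v
  -- second-level dominators of `B` and of `T`
  have hcollapseB : ∀ v, v ∈ H.Iv B ∪ H.Iv B ↔ v ∈ H.Iv B := fun v =>
    ⟨fun h => by rcases h with h | h <;> exact h, fun h => Or.inl h⟩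
  have hcollapseT : ∀ v, v ∈ H.Iv T ∪ H.Iv T ↔ v ∈ H.Iv T := fun v =>
    ⟨fun h => by rcases h with h | h <;> exact h, fun h => Or.inl h⟩
  have hSmBsub : {v | v ∈ H.Iv B ∪ H.Iv B ∧ v.2 < 0} ⊆ H.verts := by
    rintro v ⟨hv, -⟩; rw [hcollapseB, H.Iv_eq] at hv; exact hv.1
  have hSpBsub : {v | v ∈ H.Iv B ∪ H.Iv B ∧ 0 < v.2} ⊆ H.verts := by
    rintro v ⟨hv, -⟩; rw [hcollapseB, H.Iv_eq] at hv; exact hv.1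
  have hSmTsub : {v | v ∈ H.Iv T ∪ H.Iv T ∧ v.2 < 0} ⊆ H.verts := by
    rintro v ⟨hv, -⟩; rw [hcollapseT, H.Iv_eq] at hv; exact hv.1
  have hSpTsub : {v | v ∈ H.Iv T ∪ H.Iv T ∧ 0 < v.2} ⊆ H.verts := by
    rintro v ⟨hv, -⟩; rw [hcollapseT, H.Iv_eq] at hv; exact hv.1
  have hSmBne : {v | v ∈ H.Iv B ∪ H.Iv B ∧ v.2 < 0}.Nonempty := ⟨B, Or.inl hBself, hB2'⟩
  have hSpBne : {v | v ∈ H.Iv B ∪ H.Iv B ∧ 0 < v.2}.Nonempty := ⟨T, Or.inl hTinB, hT2'⟩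
  have hSmTne : {v | v ∈ H.Iv T ∪ H.Iv T ∧ v.2 < 0}.Nonempty := ⟨B, Or.inl hBinT, hB2'⟩
  have hSpTne : {v | v ∈ H.Iv T ∪ H.Iv T ∧ 0 < v.2}.Nonempty := ⟨T, Or.inl hTself, hT2'⟩
  set βB := leftmostLowest {v | v ∈ H.Iv B ∪ H.Iv B ∧ v.2 < 0} with hβBdef
  set τB := leftmostLowest {v | v ∈ H.Iv B ∪ H.Iv B ∧ 0 < v.2} with hτBdef
  set βT := leftmostLowest {v | v ∈ H.Iv T ∪ H.Iv T ∧ v.2 < 0} with hβTdef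
  set τT := leftmostLowest {v | v ∈ H.Iv T ∪ H.Iv T ∧ 0 < v.2} with hτTdef
  have hbdB : H.bdtd B 1 = (βB, τB) := by
    have e : H.bdtd B 1 = H.bstep B B := rfl
    rw [e, H.bstep_of_ne (Set.nonempty_iff_ne_empty.1 hSmBne)
      (Set.nonempty_iff_ne_empty.1 hSpBne)]
  have hbdT : H.bdtd T 1 = (βT, τT) := by
    have e : H.bdtd T 1 = H.bstep T T := rfl
    rw [e, H.bstep_of_ne (Set.nonempty_iff_ne_empty.1 hSmTne)
      (Set.nonempty_iff_ne_empty.1 hSpTne)]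
  obtain ⟨hβBmem, hβBmin, -⟩ := leftmostLowest_spec (H.verts_finite.subset hSmBsub)
    hSmBne (fun p hp q hq h => abs_eq_same_sign_neg hp.2 hq.2 h)
  obtain ⟨hτBmem, hτBmin, -⟩ := leftmostLowest_spec (H.verts_finite.subset hSpBsub)
    hSpBne (fun p hp q hq h => abs_eq_same_sign_pos hp.2 hq.2 h)
  obtain ⟨hβTmem, hβTmin, -⟩ := leftmostLowest_spec (H.verts_finite.subset hSmTsub)
    hSmTne (fun p hp q hq h => abs_eq_same_sign_neg hp.2 hq.2 h)
  obtain ⟨hτTmem, hτTmin, -⟩ := leftmostLowest_spec (H.verts_finite.subset hSpTsub)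
    hSpTne (fun p hp q hq h => abs_eq_same_sign_pos hp.2 hq.2 h)
  rw [← hβBdef] at hβBmem hβBmin
  rw [← hτBdef] at hτBmem hτBmin
  rw [← hβTdef] at hβTmem hβTmin
  rw [← hτTdef] at hτTmem hτTmin
  have hβBIvB : βB ∈ H.Iv B := by rcases hβBmem.1 with h | h <;> exact h
  have hτBIvB : τB ∈ H.Iv B := by rcases hτBmem.1 with h | h <;> exact h
  have hβTIvT : βT ∈ H.Iv T := by rcases hβTmem.1 with h | h <;> exact h
  have hτTIvT : τT ∈ H.Iv T := by rcases hτTmem.1 with h | h <;> exact h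
  -- each second-level interval is contained in the corresponding global one
  have incl_neg : ∀ w, w ∈ H.Iv B ∪ H.Iv T → w.2 < 0 → H.Iv w ⊆ H.Iv B2 := by
    intro w hw hwneg
    have hwstrip := ((hJ2 w).1 hw).2
    have hq2 : w.2 ≤ B2.2 := by
      have := hB2min w ⟨hw, hwneg⟩
      rw [abs_of_neg hB2neg, abs_of_neg hwneg] at this; linarith
    have hwreg : w ∈ H.region := H.verts_subset_region ((hJ2 w).1 hw).1
    have hre := H.reach_mono_neg hB2reg hwreg hq2 (le_of_lt hB2neg)
      (le_trans hB2reach.1 hwstrip.1) (le_trans hwstrip.2 hB2reach.2)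
    exact H.Iv_mono hre.1 hre.2
  have incl_pos : ∀ w, w ∈ H.Iv B ∪ H.Iv T → 0 < w.2 → H.Iv w ⊆ H.Iv T2 := by
    intro w hw hwpos
    have hwstrip := ((hJ2 w).1 hw).2
    have hq2 : T2.2 ≤ w.2 := by
      have := hT2min w ⟨hw, hwpos⟩
      rw [abs_of_pos hT2pos, abs_of_pos hwpos] at this; linarith
    have hwreg : w ∈ H.region := H.verts_subset_region ((hJ2 w).1 hw).1
    have hre := H.reach_mono_pos hT2reg hwreg hq2 (le_of_lt hT2pos)
      (le_trans hT2reach.1 hwstrip.1) (le_trans hwstrip.2 hT2reach.2)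
    exact H.Iv_mono hre.1 hre.2
  have iβB : H.Iv βB ⊆ H.Iv B2 := incl_neg βB (Or.inl hβBIvB) hβBmem.2
  have iβT : H.Iv βT ⊆ H.Iv B2 := incl_neg βT (Or.inr hβTIvT) hβTmem.2
  have iτB : H.Iv τB ⊆ H.Iv T2 := incl_pos τB (Or.inl hτBIvB) hτBmem.2
  have iτT : H.Iv τT ⊆ H.Iv T2 := incl_pos τT (Or.inr hτTIvT) hτTmem.2
  -- conversely, the global second dominators are among the four local ones
  have hB2eq : H.Iv B2 = H.Iv βB ∨ H.Iv B2 = H.Iv βT := by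
    rcases hB2mem.1 with h | h
    · left
      have heq : βB = B2 := by
        rw [hβBdef, hB2def]
        refine leftmostLowest_eq_of_subset ?_ (H.verts_finite.subset hJ2msub) hSmBne
          (fun p hp q hq hh => abs_eq_same_sign_neg hp.2 hq.2 hh) ?_
        · rintro v ⟨hv, hv2⟩
          rw [hcollapseB] at hv
          exact ⟨Or.inl hv, hv2⟩
        · rw [← hB2def]
          exact ⟨(hcollapseB B2).2 h, hB2neg⟩
      rw [heq]
    · right
      have heq : βT = B2 := by
        rw [hβTdef, hB2def]
        refine leftmostLowest_eq_of_subset ?_ (H.verts_finite.subset hJ2msub) hSmTne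
          (fun p hp q hq hh => abs_eq_same_sign_neg hp.2 hq.2 hh) ?_
        · rintro v ⟨hv, hv2⟩
          rw [hcollapseT] at hv
          exact ⟨Or.inr hv, hv2⟩
        · rw [← hB2def]
          exact ⟨(hcollapseT B2).2 h, hB2neg⟩
      rw [heq]
  have hT2eq : H.Iv T2 = H.Iv τB ∨ H.Iv T2 = H.Iv τT := by
    rcases hT2mem.1 with h | h
    · left
      have heq : τB = T2 := by
        rw [hτBdef, hT2def]
        refine leftmostLowest_eq_of_subset ?_ (H.verts_finite.subset hJ2psub) hSpBne
          (fun p hp q hq hh => abs_eq_same_sign_pos hp.2 hq.2 hh) ?_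
        · rintro v ⟨hv, hv2⟩
          rw [hcollapseB] at hv
          exact ⟨Or.inl hv, hv2⟩
        · rw [← hT2def]
          exact ⟨(hcollapseB T2).2 h, hT2pos⟩
      rw [heq]
    · right
      have heq : τT = T2 := by
        rw [hτTdef, hT2def]
        refine leftmostLowest_eq_of_subset ?_ (H.verts_finite.subset hJ2psub) hSpTne
          (fun p hp q hq hh => abs_eq_same_sign_pos hp.2 hq.2 hh) ?_
        · rintro v ⟨hv, hv2⟩
          rw [hcollapseT] at hv
          exact ⟨Or.inr hv, hv2⟩
        · rw [← hT2def]
          exact ⟨(hcollapseT T2).2 h, hT2pos⟩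
      rw [heq]
  -- final assembly
  have e3 : H.Ipow sv 3 = H.Iv (H.bdtd sv 2).1 ∪ H.Iv (H.bdtd sv 2).2 := rfl
  have eB : H.Ipow B 2 = H.Iv (H.bdtd B 1).1 ∪ H.Iv (H.bdtd B 1).2 := rfl
  have eT : H.Ipow T 2 = H.Iv (H.bdtd T 1).1 ∪ H.Iv (H.bdtd T 1).2 := rfl
  rw [hB1, hT1, e3, hbd2, eB, hbdB, eT, hbdT]
  show H.Iv B2 ∪ H.Iv T2 = (H.Iv βB ∪ H.Iv τB) ∪ (H.Iv βT ∪ H.Iv τT)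
  apply Set.Subset.antisymm
  · apply Set.union_subset
    · rcases hB2eq with h | h <;> rw [h]
      · intro x hx; exact Or.inl (Or.inl hx)
      · intro x hx; exact Or.inr (Or.inl hx)
    · rcases hT2eq with h | h <;> rw [h]
      · intro x hx; exact Or.inl (Or.inr hx)
      · intro x hx; exact Or.inr (Or.inr hx)
  · refine Set.union_subset (Set.union_subset ?_ ?_) (Set.union_subset ?_ ?_)
    · exact fun x hx => Or.inl (iβB hx)
    · exact fun x hx => Or.inr (iτB hx)
    · exact fun x hx => Or.inl (iβT hx)
    · exact fun x hx => Or.inr (iτT hx)
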